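/- Let φ₀ : ℝ → ℝ be differentiable on ℝ with φ₀' differentiable at x₀, and assume φ₀''(x₀) < 0. Let f₀ = exp ∘ φ₀ and, for r > 0, define φ_r(y) = exp(−φ₀(y)/r). Then as r → ∞, (r·f₀(x₀)³·|φ_r''(x₀)| / (φ_r(x₀)·24))^{1/5} converges to (f₀(x₀)³·|φ₀''(x₀)| / 24)^{1/5}, and (r³·f₀(x₀)⁴·|φ_r''(x₀)|³ / (φ_r(x₀)³·24³))^{1/5} converges to (f₀(x₀)⁴·|φ₀''(x₀)|³ / 24³)^{1/5}. -/

import Mathlib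

open Filter

lemma second_deriv_exp_div (φ₀ : ℝ → ℝ) (x₀ : ℝ)
    (hd : Differentiable ℝ φ₀) (hd2 : DifferentiableAt ℝ (deriv φ₀) x₀)
    (r : ℝ) (hr : r ≠ 0) :
    deriv (deriv (fun y => Real.exp (-φ₀ y / r))) x₀ =
      Real.exp (-φ₀ x₀ / r) *
        ((deriv φ₀ x₀) ^ 2 / r ^ 2 - deriv (deriv φ₀) x₀ / r) := by
  have h1 : ∀ y, HasDerivAt (fun y => Real.exp (-φ₀ y / r))
      (Real.exp (-φ₀ y / r) * (-(deriv φ₀ y) / r)) y := by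
    intro y
    exact (((hd y).hasDerivAt.neg).div_const r).exp
  have hder : deriv (fun y => Real.exp (-φ₀ y / r))
      = fun y => Real.exp (-φ₀ y / r) * (-(deriv φ₀ y) / r) := by
    funext y; exact (h1 y).deriv
  rw [hder]
  have h2 : HasDerivAt (fun y => Real.exp (-φ₀ y / r) * (-(deriv φ₀ y) / r))
      ((Real.exp (-φ₀ x₀ / r) * (-(deriv φ₀ x₀) / r)) * (-(deriv φ₀ x₀) / r)
        + Real.exp (-φ₀ x₀ / r) * (-(deriv (deriv φ₀) x₀) / r)) x₀ := by
    exact (h1 x₀).mul ((hd2.hasDerivAt.neg).div_const r)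
  rw [h2.deriv]; ring

/-- As `r → ∞`, the s-concave constants `d^{(0)}_{2,sc}` and `d^{(1)}_{2,sc}` converge to
the log-concave constants `d^{(0)}_{2,lc}` and `d^{(1)}_{2,lc}`, respectively. -/
theorem sc_constants_tendsto_lc
    (φ₀ : ℝ → ℝ) (x₀ : ℝ)
    (hd : Differentiable ℝ φ₀) (hd2 : DifferentiableAt ℝ (deriv φ₀) x₀)
    (hneg : deriv (deriv φ₀) x₀ < 0)
    (f₀ : ℝ → ℝ) (hf₀ : f₀ = fun y => Real.exp (φ₀ y)) :
    Tendsto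
        (fun r : ℝ =>
          (r * f₀ x₀ ^ 3 *
              |deriv (deriv (fun y => Real.exp (-φ₀ y / r))) x₀| /
            (Real.exp (-φ₀ x₀ / r) * 24)) ^ ((1 : ℝ) / 5))
        atTop
        (nhds ((f₀ x₀ ^ 3 * |deriv (deriv φ₀) x₀| / 24) ^ ((1 : ℝ) / 5))) ∧
      Tendsto
        (fun r : ℝ =>
          (r ^ 3 * f₀ x₀ ^ 4 *
              |deriv (deriv (fun y => Real.exp (-φ₀ y / r))) x₀| ^ 3 /
            (Real.exp (-φ₀ x₀ / r) ^ 3 * 24 ^ 3)) ^ ((1 : ℝ) / 5))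
        atTop
        (nhds ((f₀ x₀ ^ 4 * |deriv (deriv φ₀) x₀| ^ 3 / 24 ^ 3) ^ ((1 : ℝ) / 5))) := by
  set d := deriv φ₀ x₀ with hd'
  set D := deriv (deriv φ₀) x₀ with hD'
  set f := f₀ x₀ with hf'
  -- the core limit
  have hcore : Tendsto (fun r : ℝ => |d ^ 2 / r - D|) atTop (nhds |D|) := by
    have h0 : Tendsto (fun r : ℝ => d ^ 2 / r) atTop (nhds 0) :=
      tendsto_const_nhds.div_atTop tendsto_id
    have h1 : Tendsto (fun r : ℝ => d ^ 2 / r - D) atTop (nhds (0 - D)) :=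
      h0.sub tendsto_const_nhds
    simpa using h1.abs
  -- eventual equality lemmas
  have key : ∀ r : ℝ, 0 < r →
      r * |deriv (deriv (fun y => Real.exp (-φ₀ y / r))) x₀| /
        Real.exp (-φ₀ x₀ / r) = |d ^ 2 / r - D| := by
    intro r hr
    rw [second_deriv_exp_div φ₀ x₀ hd hd2 r hr.ne']
    rw [abs_mul, abs_of_pos (Real.exp_pos _)]
    have hE : Real.exp (-φ₀ x₀ / r) ≠ 0 := (Real.exp_pos _).ne'
    rw [show |d ^ 2 / r - D| = r * |d ^ 2 / r ^ 2 - D / r| by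
      rw [show d ^ 2 / r - D = r * (d ^ 2 / r ^ 2 - D / r) by field_simp,
        abs_mul, abs_of_pos hr]]
    field_simp
    ring
  constructor
  · apply Tendsto.rpow_const
    · apply Tendsto.congr' ?_ ((hcore.const_mul (f ^ 3)).div_const 24)
      filter_upwards [eventually_gt_atTop (0 : ℝ)] with r hr
      rw [← key r hr]
      have hE : Real.exp (-φ₀ x₀ / r) ≠ 0 := (Real.exp_pos _).ne'
      field_simp
    · right; norm_num
  · apply Tendsto.rpow_const
    · have h3 : Tendsto (fun r : ℝ => f ^ 4 * |d ^ 2 / r - D| ^ 3 / 24 ^ 3) atTop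
          (nhds (f ^ 4 * |D| ^ 3 / 24 ^ 3)) :=
        (((hcore.pow 3).const_mul (f ^ 4)).div_const (24 ^ 3))
      apply Tendsto.congr' ?_ h3
      filter_upwards [eventually_gt_atTop (0 : ℝ)] with r hr
      rw [← key r hr]
      have hE : Real.exp (-φ₀ x₀ / r) ≠ 0 := (Real.exp_pos _).ne'
      field_simp
    · right; norm_num
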